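/- arXiv:1505.01792 — 2 statements merged into one kernel-verified Lean document; each statement's English description precedes it below -/
import Mathlib

section
/- Let (X_j, d_j) be a sequence of precompact length metric spaces with precompact boundary ∂X_j = X̄_j \ X_j. Suppose there is a decreasing sequence δ_i → 0 such that for each i the inner regions X_j^{δ_i} are nonempty and the sequence of closures (cl(X_j^{δ_i}), d_j) converges in Gromov–Hausdorff sense as j → ∞ to a compact metric space, and suppose the boundaries (∂X_j, d_j) converge in Gromov–Hausdorff sense to a compact metric space. Then a subsequence of the completions (X̄_j, d_j) converges in Gromov–Hausdorff sense to a compact metric space. -/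
open Metric Set Filter GromovHausdorff
open UniformSpace (Completion)

noncomputable section

/-- The boundary of a metric space: its metric completion minus (the image of) the space. -/
def mBoundary (X : Type u) [MetricSpace X] : Set (Completion X) :=
  (Set.range ((↑) : X → Completion X))ᶜ

/-- The δ-inner region of a metric space. -/
def innerRegion (X : Type u) [MetricSpace X] (δ : ℝ) : Set X :=
  {x : X | δ < infDist (↑x : Completion X) (mBoundary X)}

/-- A metric space is a length space: every pair of points admits approximate midpoints. -/
def IsLengthSpace (X : Type u) [MetricSpace X] : Prop :=
  ∀ x y : X, ∀ ε > (0 : ℝ), ∃ z : X, dist x z ≤ dist x y / 2 + ε ∧ dist z y ≤ dist x y / 2 + ε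

/-- The point of Gromov–Hausdorff space determined by a nonempty compact subset. -/
def setGH {Z : Type u} [MetricSpace Z] (S : Set Z) (hc : IsCompact S) (hn : S.Nonempty) :
    GHSpace :=
  @toGHSpace S _ (isCompact_iff_compactSpace.mp hc) hn.to_subtype

section Helpers

variable {A : Type u} {B : Type v} [MetricSpace A] [CompactSpace A] [Nonempty A]
  [MetricSpace B] [CompactSpace B] [Nonempty B]

lemma diam_le_ghDist :
    diam (univ : Set A) ≤ diam (univ : Set B) + 2 * ghDist A B := by
  obtain ⟨Φ, Ψ, hΦ, hΨ, hd⟩ := ghDist_eq_hausdorffDist A B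
  have hcΦ : IsCompact (range Φ) := by
    rw [← image_univ]; exact isCompact_univ.image hΦ.continuous
  have hcΨ : IsCompact (range Ψ) := by
    rw [← image_univ]; exact isCompact_univ.image hΨ.continuous
  have hfin := hausdorffEdist_ne_top_of_nonempty_of_bounded (range_nonempty Φ)
    (range_nonempty Ψ) hcΦ.isBounded hcΨ.isBounded
  have hg0 : 0 ≤ ghDist A B := by
    rw [hd]; exact hausdorffDist_nonneg
  refine le_of_forall_pos_le_add fun η hη => ?_
  have hlt : hausdorffDist (range Φ) (range Ψ) < ghDist A B + η / 2 := by
    rw [← hd]; linarith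
  rw [← hΦ.diam_range]
  refine diam_le_of_forall_dist_le (by positivity) fun x hx y hy => ?_
  obtain ⟨x', hx', hxx'⟩ := exists_dist_lt_of_hausdorffDist_lt hx hlt hfin
  obtain ⟨y', hy', hyy'⟩ := exists_dist_lt_of_hausdorffDist_lt hy hlt hfin
  have h1 : dist x' y' ≤ diam (range Ψ) := dist_le_diam_of_mem hcΨ.isBounded hx' hy'
  rw [hΨ.diam_range] at h1
  calc dist x y ≤ dist x x' + dist x' y' + dist y' y := dist_triangle4 x x' y' y
    _ ≤ (ghDist A B + η / 2) + (diam (univ : Set B)) + (ghDist A B + η / 2) := by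
        rw [dist_comm y' y]; exact add_le_add_three hxx'.le h1 hyy'.le
    _ = diam (univ : Set B) + 2 * ghDist A B + η := by ring

lemma cover_of_ghDist {r η : ℝ} (hη : 0 < η) (t : Finset B)
    (hcov : (univ : Set B) ⊆ ⋃ x ∈ t, ball x r) :
    ∃ t' : Finset A, t'.card ≤ t.card ∧
      (univ : Set A) ⊆ ⋃ x ∈ t', ball x (r + 2 * ghDist A B + η) := by
  classical
  obtain ⟨Φ, Ψ, hΦ, hΨ, hd⟩ := ghDist_eq_hausdorffDist A B
  have hcΦ : IsCompact (range Φ) := by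
    rw [← image_univ]; exact isCompact_univ.image hΦ.continuous
  have hcΨ : IsCompact (range Ψ) := by
    rw [← image_univ]; exact isCompact_univ.image hΨ.continuous
  have hfin := hausdorffEdist_ne_top_of_nonempty_of_bounded (range_nonempty Φ)
    (range_nonempty Ψ) hcΦ.isBounded hcΨ.isBounded
  have hlt : hausdorffDist (range Φ) (range Ψ) < ghDist A B + η / 2 := by
    rw [← hd]; linarith
  have hg : ∀ b : B, ∃ a : A, dist (Ψ b) (Φ a) < ghDist A B + η / 2 := by
    intro b
    obtain ⟨p, hp, hdp⟩ := exists_dist_lt_of_hausdorffDist_lt' (mem_range_self b) hlt hfin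
    obtain ⟨a, rfl⟩ := hp
    exact ⟨a, by rwa [dist_comm]⟩
  choose g hgd using hg
  refine ⟨t.image g, Finset.card_image_le, fun a _ => ?_⟩
  obtain ⟨q, hq, haq⟩ := exists_dist_lt_of_hausdorffDist_lt (mem_range_self a) hlt hfin
  obtain ⟨b, rfl⟩ := hq
  obtain ⟨c, hc, hbc⟩ : ∃ c ∈ t, b ∈ ball c r := by
    simpa using hcov (mem_univ b)
  have hfinal : dist a (g c) < r + 2 * ghDist A B + η := by
    have h1 : dist a (g c) = dist (Φ a) (Φ (g c)) := (hΦ.dist_eq _ _).symm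
    have h2 : dist (Φ a) (Φ (g c)) ≤ dist (Φ a) (Ψ b) + dist (Ψ b) (Ψ c) + dist (Ψ c) (Φ (g c)) :=
      dist_triangle4 _ _ _ _
    have h3 : dist (Ψ b) (Ψ c) = dist b c := hΨ.dist_eq _ _
    have h4 := hgd c
    rw [mem_ball] at hbc
    rw [h1]
    calc dist (Φ a) (Φ (g c)) ≤ _ := h2
      _ < (ghDist A B + η / 2) + r + (ghDist A B + η / 2) := by
          rw [h3]; linarith
      _ = r + 2 * ghDist A B + η := by ring
  exact mem_iUnion₂.2 ⟨g c, Finset.mem_image_of_mem g hc, mem_ball.2 hfinal⟩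

lemma diam_subtype_univ {Z : Type w} [MetricSpace Z] (S : Set Z) :
    diam (univ : Set ↥S) = diam S := by
  rw [← isometry_subtype_coe.diam_range, Subtype.range_coe]

lemma approx_ivt_aux {Y : Type w} [MetricSpace Y] (hlen : IsLengthSpace Y) (f : Y → ℝ)
    (hf : ∀ x y, f x ≤ f y + dist x y) {a w : ℝ} (hw : 0 < w) :
    ∀ n : ℕ, ∀ x y : Y, dist x y ≤ w * (4 / 3) ^ n → a + w < f x → f y ≤ a →
      ∃ z, a < f z ∧ f z ≤ a + w := by
  intro n
  induction n with
  | zero =>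
    intro x y hd hx hy
    exfalso
    have := hf x y
    simp only [pow_zero, mul_one] at hd
    linarith
  | succ n ih =>
    intro x y hd hx hy
    have hd0 : 0 < dist x y := by
      rcases lt_or_eq_of_le (dist_nonneg : (0:ℝ) ≤ dist x y) with h | h
      · exact h
      · exfalso
        have hxy : x = y := dist_eq_zero.1 h.symm
        subst hxy
        linarith
    obtain ⟨z, hz1, hz2⟩ := hlen x y (dist x y / 4) (by positivity)
    have hpow : w * (4 / 3) ^ (n + 1) * (3 / 4) = w * (4 / 3) ^ n := by
      rw [pow_succ]; ring
    have h34 : dist x y / 2 + dist x y / 4 ≤ w * (4 / 3) ^ n := by nlinarith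
    rcases le_or_gt (f z) a with h | h
    · exact ih x z (hz1.trans h34) hx h
    rcases le_or_gt (f z) (a + w) with h' | h'
    · exact ⟨z, h, h'⟩
    · exact ih z y (hz2.trans h34) h' hy

lemma approx_ivt {Y : Type w} [MetricSpace Y] (hlen : IsLengthSpace Y) (f : Y → ℝ)
    (hf : ∀ x y, f x ≤ f y + dist x y) {a w : ℝ} (hw : 0 < w)
    (x y : Y) (hx : a + w < f x) (hy : f y ≤ a) : ∃ z, a < f z ∧ f z ≤ a + w := by
  obtain ⟨n, hn⟩ := pow_unbounded_of_one_lt (R := ℝ) (dist x y / w)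
    (show (1 : ℝ) < 4 / 3 by norm_num)
  refine approx_ivt_aux hlen f hf hw n x y ?_ hx hy
  rw [div_lt_iff₀ hw] at hn
  nlinarith [pow_pos (show (0:ℝ) < 4/3 by norm_num) n]

lemma compact_finset_cover (W : Type w) [MetricSpace W] [CompactSpace W] {r : ℝ} (hr : 0 < r) :
    ∃ t : Finset W, (univ : Set W) ⊆ ⋃ x ∈ t, ball x r := by
  classical
  obtain ⟨t, -, htf, hcov⟩ := finite_cover_balls_of_compact (X := W) isCompact_univ hr
  refine ⟨htf.toFinset, ?_⟩
  intro z hz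
  simpa [htf.mem_toFinset] using hcov hz


lemma setGH_aux {Z : Type w} [MetricSpace Z] {S : Set Z} [CompactSpace ↥S] [Nonempty ↥S]
    (hc : IsCompact S) (hn : S.Nonempty) : toGHSpace ↥S = setGH S hc hn := rfl

lemma setGH_ghDist {Z : Type w} [MetricSpace Z] {S : Set Z} [CompactSpace ↥S] [Nonempty ↥S]
    (hc : IsCompact S) (hn : S.Nonempty) (q : GHSpace) :
    ghDist ↥S q.Rep = dist (setGH S hc hn) q := by
  show dist (toGHSpace ↥S) (toGHSpace q.Rep) = _
  rw [GHSpace.toGHSpace_rep, setGH_aux hc hn]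

lemma ghDist_rep_setGH {Z : Type w} [MetricSpace Z] {S : Set Z} [CompactSpace ↥S] [Nonempty ↥S]
    (hc : IsCompact S) (hn : S.Nonempty) :
    ghDist (setGH S hc hn).Rep ↥S = 0 := by
  show dist (toGHSpace (setGH S hc hn).Rep) (toGHSpace ↥S) = 0
  rw [GHSpace.toGHSpace_rep, setGH_aux hc hn, dist_self]

lemma recenter {Z : Type w} [MetricSpace Z] {S : Set Z} [Nonempty ↥S] {ρ : ℝ}
    (s : Finset Z) (hcov : S ⊆ ⋃ x ∈ s, ball x ρ) :
    ∃ t : Finset ↥S, t.card ≤ s.card ∧ (univ : Set ↥S) ⊆ ⋃ x ∈ t, ball x (2 * ρ) := by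
  classical
  let F : Z → ↥S := fun x =>
    if h : (S ∩ ball x ρ).Nonempty then ⟨h.choose, h.choose_spec.1⟩ else Classical.arbitrary _
  refine ⟨s.image F, Finset.card_image_le, fun z _ => ?_⟩
  obtain ⟨x, hx, hzx⟩ : ∃ x ∈ s, (z : Z) ∈ ball x ρ := by
    simpa using hcov z.2
  have hnonempty : (S ∩ ball x ρ).Nonempty := ⟨z, z.2, hzx⟩
  have hF : ((F x : ↥S) : Z) ∈ S ∩ ball x ρ := by
    simp only [F, dif_pos hnonempty]
    exact hnonempty.choose_spec
  have hdist : dist z (F x) < 2 * ρ := by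
    rw [Subtype.dist_eq]
    calc dist (z : Z) (F x : Z) ≤ dist (z : Z) x + dist x (F x : Z) := dist_triangle _ _ _
      _ < ρ + ρ := add_lt_add (mem_ball.1 hzx) (by
          have := hF.2; rw [mem_ball, dist_comm] at this; exact this)
      _ = 2 * ρ := by ring
  exact mem_iUnion₂.2 ⟨F x, Finset.mem_image_of_mem F hx, mem_ball.2 hdist⟩

lemma cover_set_of_ghDist_lt {Z : Type w} [MetricSpace Z] {S : Set Z}
    (hc : IsCompact S) (hn : S.Nonempty) (q : GHSpace) {ρ : ℝ} (hρ : 0 < ρ)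
    (h : dist (setGH S hc hn) q < ρ) (t : Finset q.Rep)
    (ht : (univ : Set q.Rep) ⊆ ⋃ x ∈ t, ball x ρ) :
    ∃ s : Finset Z, s.card ≤ t.card ∧ S ⊆ ⋃ x ∈ s, ball x (3 * ρ) := by
  classical
  haveI := isCompact_iff_compactSpace.mp hc
  haveI := hn.to_subtype
  have hg : ghDist ↥S q.Rep = dist (setGH S hc hn) q := setGH_ghDist hc hn q
  have hηpos : 0 < 2 * (ρ - ghDist ↥S q.Rep) := by rw [hg]; linarith
  obtain ⟨t', hcard, hcov⟩ := cover_of_ghDist (A := ↥S) (B := q.Rep) hηpos t ht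
  have hradius : ρ + 2 * ghDist ↥S q.Rep + 2 * (ρ - ghDist ↥S q.Rep) = 3 * ρ := by ring
  rw [hradius] at hcov
  refine ⟨t'.image Subtype.val, (Finset.card_image_le).trans hcard, fun z hz => ?_⟩
  obtain ⟨c, hc', hdc⟩ : ∃ c ∈ t', (⟨z, hz⟩ : ↥S) ∈ ball c (3 * ρ) := by
    simpa using hcov (mem_univ (⟨z, hz⟩ : ↥S))
  refine mem_iUnion₂.2 ⟨(c : Z), Finset.mem_image_of_mem _ hc', ?_⟩
  rw [mem_ball] at hdc ⊢
  rwa [Subtype.dist_eq] at hdc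

lemma cover_rep_of_setGH {Z : Type w} [MetricSpace Z] {S : Set Z}
    (hc : IsCompact S) (hn : S.Nonempty) {ρ : ℝ} (hρ : 0 < ρ)
    (s : Finset Z) (hcov : S ⊆ ⋃ x ∈ s, ball x ρ) :
    ∃ t : Finset (setGH S hc hn).Rep, t.card ≤ s.card ∧
      (univ : Set (setGH S hc hn).Rep) ⊆ ⋃ x ∈ t, ball x (3 * ρ) := by
  haveI := isCompact_iff_compactSpace.mp hc
  haveI := hn.to_subtype
  obtain ⟨t₁, hcard₁, hcov₁⟩ := recenter s hcov
  have hg : ghDist (setGH S hc hn).Rep ↥S = 0 := ghDist_rep_setGH hc hn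
  obtain ⟨t₂, hcard₂, hcov₂⟩ := cover_of_ghDist (A := (setGH S hc hn).Rep) (B := ↥S)
    (r := 2 * ρ) (η := ρ) hρ t₁ hcov₁
  have hradius : 2 * ρ + 2 * ghDist (setGH S hc hn).Rep ↥S + ρ = 3 * ρ := by
    rw [hg]; ring
  rw [hradius] at hcov₂
  exact ⟨t₂, hcard₂.trans hcard₁, hcov₂⟩


section BoundaryAux

variable {Y : Type u} [MetricSpace Y]

lemma decomp {d : ℝ} (hd : 0 < d) (z : Completion Y) :
    z ∈ closure (((↑) : Y → Completion Y) '' innerRegion Y d) ∨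
      infDist z (closure (mBoundary Y)) ≤ d := by
  by_cases hz : z ∈ Set.range ((↑) : Y → Completion Y)
  · obtain ⟨x, rfl⟩ := hz
    rcases lt_or_ge d (infDist ((x : Completion Y)) (mBoundary Y)) with h | h
    · exact Or.inl (subset_closure (mem_image_of_mem _ h))
    · right; rwa [infDist_closure]
  · right
    rw [infDist_closure, show infDist z (mBoundary Y) = 0 from infDist_zero_of_mem hz]
    exact hd.le

lemma cross (hlen : IsLengthSpace Y) (hbne : (mBoundary Y).Nonempty) {a b : ℝ}
    (ha : 0 < a) (hab : a < b) (hx : (innerRegion Y b).Nonempty) :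
    ∃ p ∈ closure (((↑) : Y → Completion Y) '' innerRegion Y a),
      infDist p (closure (mBoundary Y)) ≤ b := by
  set f : Y → ℝ := fun x => infDist ((x : Completion Y)) (mBoundary Y) with hf
  have hlip : ∀ x y : Y, f x ≤ f y + dist x y := by
    intro x y
    have h1 := infDist_le_infDist_add_dist (x := (x : Completion Y)) (y := (y : Completion Y))
      (s := mBoundary Y)
    rwa [UniformSpace.Completion.dist_eq] at h1
  obtain ⟨x₀, hx₀⟩ := hx
  obtain ⟨b₀, hb₀⟩ := hbne
  have hb₀' : b₀ ∈ closure (Set.range ((↑) : Y → Completion Y)) :=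
    UniformSpace.Completion.denseRange_coe b₀
  obtain ⟨q, hq1, hq2⟩ := Metric.mem_closure_iff.1 hb₀' a ha
  obtain ⟨y, rfl⟩ := hq1
  have hy : f y ≤ a :=
    le_of_lt (lt_of_le_of_lt (infDist_le_dist_of_mem hb₀) (by rwa [dist_comm]))
  have hx0 : a + (b - a) < f x₀ := by
    have h2 : b < f x₀ := hx₀
    linarith
  obtain ⟨z, hz1, hz2⟩ := approx_ivt hlen f hlip (show (0:ℝ) < b - a by linarith) x₀ y hx0 hy
  refine ⟨(z : Completion Y), subset_closure (mem_image_of_mem _ (show a < f z from hz1)), ?_⟩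
  rw [infDist_closure]
  show f z ≤ b
  linarith

lemma diam_completion_le [CompactSpace (Completion Y)] (hlen : IsLengthSpace Y)
    (hbne : (mBoundary Y).Nonempty) {a b : ℝ} (ha : 0 < a) (hab : a < b)
    (hx : (innerRegion Y b).Nonempty) :
    diam (univ : Set (Completion Y)) ≤
      diam (closure (((↑) : Y → Completion Y) '' innerRegion Y a)) +
        diam (closure (mBoundary Y)) + b + 2 * a + 3 := by
  set In := closure (((↑) : Y → Completion Y) '' innerRegion Y a) with hIn
  set Bd := closure (mBoundary Y) with hBd
  have hInB : Bornology.IsBounded In := isClosed_closure.isCompact.isBounded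
  have hBdB : Bornology.IsBounded Bd := isClosed_closure.isCompact.isBounded
  have hBdne : Bd.Nonempty := hbne.closure
  obtain ⟨p, hpIn, hpd⟩ := cross hlen hbne ha hab hx
  obtain ⟨b₁, hb₁, hpb₁⟩ : ∃ w ∈ Bd, dist p w < b + 1 :=
    (infDist_lt_iff hBdne).1 (by linarith)
  have hIn0 : 0 ≤ diam In := diam_nonneg
  have hBd0 : 0 ≤ diam Bd := diam_nonneg
  have key : ∀ z : Completion Y, z ∈ In ∨ ∃ w ∈ Bd, dist z w < a + 1 := by
    intro z
    rcases decomp ha z with h | h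
    · exact Or.inl h
    · exact Or.inr ((infDist_lt_iff hBdne).1 (by linarith))
  refine diam_le_of_forall_dist_le (by linarith) fun z₁ _ z₂ _ => ?_
  rcases key z₁ with h₁ | ⟨w₁, hw₁, hzw₁⟩ <;> rcases key z₂ with h₂ | ⟨w₂, hw₂, hzw₂⟩
  · have := dist_le_diam_of_mem hInB h₁ h₂
    linarith
  · have t1 : dist z₁ z₂ ≤ dist z₁ p + dist p b₁ + dist b₁ w₂ + dist w₂ z₂ :=
      dist_triangle4 _ _ _ _ |>.trans (by
        have := dist_triangle b₁ w₂ z₂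
        linarith [dist_triangle z₁ p b₁])
    have e1 : dist z₁ p ≤ diam In := dist_le_diam_of_mem hInB h₁ hpIn
    have e2 : dist b₁ w₂ ≤ diam Bd := dist_le_diam_of_mem hBdB hb₁ hw₂
    have e3 : dist w₂ z₂ = dist z₂ w₂ := dist_comm _ _
    linarith
  · have t1 : dist z₁ z₂ ≤ dist z₁ w₁ + dist w₁ b₁ + dist b₁ p + dist p z₂ :=
      dist_triangle4 _ _ _ _ |>.trans (by linarith [dist_triangle b₁ p z₂])
    have e1 : dist w₁ b₁ ≤ diam Bd := dist_le_diam_of_mem hBdB hw₁ hb₁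
    have e2 : dist b₁ p = dist p b₁ := dist_comm _ _
    have e3 : dist p z₂ ≤ diam In := dist_le_diam_of_mem hInB hpIn h₂
    linarith
  · have t1 : dist z₁ z₂ ≤ dist z₁ w₁ + dist w₁ w₂ + dist w₂ z₂ := dist_triangle4 _ _ _ _
    have e1 : dist w₁ w₂ ≤ diam Bd := dist_le_diam_of_mem hBdB hw₁ hw₂
    have e2 : dist w₂ z₂ = dist z₂ w₂ := dist_comm _ _
    linarith

lemma cover_completion [DecidableEq (Completion Y)] (hbne : (mBoundary Y).Nonempty)
    {d ρ : ℝ} (hd : 0 < d) (hdρ : d < ρ / 4)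
    (sI : Finset (Completion Y))
    (hI : closure (((↑) : Y → Completion Y) '' innerRegion Y d) ⊆
      ⋃ x ∈ sI, ball x (3 * (ρ / 4)))
    (sB : Finset (Completion Y))
    (hB : closure (mBoundary Y) ⊆ ⋃ x ∈ sB, ball x (3 * (ρ / 4))) :
    (univ : Set (Completion Y)) ⊆ ⋃ x ∈ sI ∪ sB, ball x ρ := by
  intro z _
  rcases decomp hd z with h | h
  · obtain ⟨c, hc, hdc⟩ : ∃ c ∈ sI, z ∈ ball c (3 * (ρ / 4)) := by simpa using hI h
    refine mem_iUnion₂.2 ⟨c, Finset.mem_union_left _ hc, mem_ball.2 ?_⟩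
    have := mem_ball.1 hdc
    linarith
  · have hlt : infDist z (closure (mBoundary Y)) < ρ / 4 := lt_of_le_of_lt h hdρ
    obtain ⟨w, hw, hzw⟩ := (infDist_lt_iff hbne.closure).1 hlt
    obtain ⟨c, hc, hdc⟩ : ∃ c ∈ sB, w ∈ ball c (3 * (ρ / 4)) := by simpa using hB hw
    refine mem_iUnion₂.2 ⟨c, Finset.mem_union_right _ hc, mem_ball.2 ?_⟩
    have h1 := mem_ball.1 hdc
    calc dist z c ≤ dist z w + dist w c := dist_triangle _ _ _
      _ < ρ := by linarith

end BoundaryAux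

end Helpers

/-- GH compactness for metric spaces with converging inner regions and boundaries: if the
closed inner regions `cl(X_j^{δ_i})` converge in GH sense for each `i` (to the compact space
represented by `L i`), and the boundaries `∂X_j` converge in GH sense (to `L∂`), then a
subsequence of the completions `X̄_j` converges in GH sense to some compact metric space. -/
theorem stmt2 {X : ℕ → Type u} [∀ j, MetricSpace (X j)]
    -- the X_j are precompact: their completions are compact
    [hcc : ∀ j, CompactSpace (Completion (X j))]
    -- the X_j are length spaces
    (hlen : ∀ j, IsLengthSpace (X j))
    -- the boundaries are nonempty and precompact
    (hbne : ∀ j, (mBoundary (X j)).Nonempty)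
    (hbpre : ∀ j, TotallyBounded (mBoundary (X j)))
    -- a decreasing sequence δ_i → 0 with nonempty inner regions
    (δ : ℕ → ℝ) (hpos : ∀ i, 0 < δ i) (hdec : StrictAnti δ)
    (hlim : Tendsto δ atTop (nhds 0))
    (hne : ∀ j i, (innerRegion (X j) (δ i)).Nonempty)
    -- GH convergence of the closed inner regions, for every i
    (L : ℕ → GHSpace)
    (hGHin : ∀ i, Tendsto (fun j => dist
        (setGH (closure (((↑) : X j → Completion (X j)) '' innerRegion (X j) (δ i)))
          isClosed_closure.isCompact (((hne j i).image _).closure)) (L i))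
      atTop (nhds 0))
    -- GH convergence of the boundaries
    (Lb : GHSpace)
    (hGHb : Tendsto (fun j => dist
        (setGH (closure (mBoundary (X j))) isClosed_closure.isCompact (hbne j).closure) Lb)
      atTop (nhds 0)) :
    ∃ φ : ℕ → ℕ, StrictMono φ ∧ ∃ K : GHSpace,
      Tendsto (fun k => dist
        (setGH (Set.univ : Set (Completion (X (φ k)))) isCompact_univ
          ⟨↑(hne (φ k) 0).choose, trivial⟩) K) atTop (nhds 0) := by
  classical
  have hδ1 : δ 1 < δ 0 := hdec (by norm_num)
  -- uniform bounds on the GH distances to the limits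
  obtain ⟨M1, hM1'⟩ := (hGHin 1).bddAbove_range
  have hM1 := fun j => hM1' (mem_range_self (f := fun j => dist
        (setGH (closure (((↑) : X j → Completion (X j)) '' innerRegion (X j) (δ 1)))
          isClosed_closure.isCompact (((hne j 1).image _).closure)) (L 1)) j)
  obtain ⟨Mb, hMb'⟩ := hGHb.bddAbove_range
  have hMb := fun j => hMb' (mem_range_self (f := fun j => dist
        (setGH (closure (mBoundary (X j))) isClosed_closure.isCompact (hbne j).closure) Lb) j)
  -- diameter bounds on inner regions and boundaries
  have hdiamIn : ∀ j, diam (closure (((↑) : X j → Completion (X j)) '' innerRegion (X j) (δ 1)))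
      ≤ diam (univ : Set (L 1).Rep) + 2 * M1 := by
    intro j
    haveI := hcc j
    have hc : IsCompact (closure (((↑) : X j → Completion (X j)) '' innerRegion (X j) (δ 1))) :=
      isClosed_closure.isCompact
    have hn : (closure (((↑) : X j → Completion (X j)) '' innerRegion (X j) (δ 1))).Nonempty :=
      ((hne j 1).image _).closure
    haveI := isCompact_iff_compactSpace.mp hc
    haveI := hn.to_subtype
    have h1 := diam_le_ghDist
      (A := ↥(closure (((↑) : X j → Completion (X j)) '' innerRegion (X j) (δ 1))))
      (B := (L 1).Rep)
    rw [diam_subtype_univ, setGH_ghDist hc hn] at h1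
    have h2 : dist (setGH _ hc hn) (L 1) ≤ M1 := hM1 j
    linarith
  have hdiamB : ∀ j, diam (closure (mBoundary (X j)))
      ≤ diam (univ : Set Lb.Rep) + 2 * Mb := by
    intro j
    haveI := hcc j
    have hc : IsCompact (closure (mBoundary (X j))) := isClosed_closure.isCompact
    have hn : (closure (mBoundary (X j))).Nonempty := (hbne j).closure
    haveI := isCompact_iff_compactSpace.mp hc
    haveI := hn.to_subtype
    have h1 := diam_le_ghDist (A := ↥(closure (mBoundary (X j)))) (B := Lb.Rep)
    rw [diam_subtype_univ, setGH_ghDist hc hn] at h1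
    have h2 : dist (setGH _ hc hn) Lb ≤ Mb := hMb j
    linarith
  -- uniform diameter bound on the completions
  set C : ℝ := (diam (univ : Set (L 1).Rep) + 2 * M1) + (diam (univ : Set Lb.Rep) + 2 * Mb)
      + δ 0 + 2 * δ 1 + 3 with hCdef
  have hC : ∀ j, diam (univ : Set (Completion (X j))) ≤ C := by
    intro j
    haveI := hcc j
    have h0 := diam_completion_le (hlen j) (hbne j) (hpos 1) hδ1 (hne j 0)
    have h1 := hdiamIn j
    have h2 := hdiamB j
    rw [hCdef]
    linarith
  -- uniform covering bound on the completions
  have F5 : ∀ ρ : ℝ, 0 < ρ → ∃ N : ℕ, ∀ j, ∃ s : Finset (Completion (X j)),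
      s.card ≤ N ∧ (univ : Set (Completion (X j))) ⊆ ⋃ x ∈ s, ball x ρ := by
    intro ρ hρ
    have hρ4 : 0 < ρ / 4 := by positivity
    have hρ12 : 0 < ρ / 4 / 3 := by positivity
    obtain ⟨i, hi⟩ : ∃ i, δ i < ρ / 4 / 3 := ((tendsto_order.1 hlim).2 _ hρ12).exists
    obtain ⟨tL, htL⟩ := compact_finset_cover ((L i).Rep) hρ4
    obtain ⟨tB, htB⟩ := compact_finset_cover (Lb.Rep) hρ4
    obtain ⟨J1, hJ1⟩ := eventually_atTop.1 ((tendsto_order.1 (hGHin i)).2 _ hρ4)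
    obtain ⟨J2, hJ2⟩ := eventually_atTop.1 ((tendsto_order.1 hGHb).2 _ hρ4)
    have small : ∀ j, ∃ s : Finset (Completion (X j)),
        (univ : Set (Completion (X j))) ⊆ ⋃ x ∈ s, ball x ρ := by
      intro j
      haveI := hcc j
      exact compact_finset_cover _ hρ
    choose gs hgs using small
    refine ⟨max (tL.card + tB.card) ((Finset.range (max J1 J2)).sup fun j => (gs j).card),
      fun j => ?_⟩
    rcases le_or_gt (max J1 J2) j with hj | hj
    · haveI := hcc j
      have hcI : IsCompact (closure (((↑) : X j → Completion (X j)) '' innerRegion (X j) (δ i)))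
        := isClosed_closure.isCompact
      have hnI : (closure (((↑) : X j → Completion (X j)) '' innerRegion (X j) (δ i))).Nonempty
        := ((hne j i).image _).closure
      have hdI : dist (setGH _ hcI hnI) (L i) < ρ / 4 :=
        hJ1 j (le_trans (le_max_left _ _) hj)
      obtain ⟨sI, hsIcard, hsIcov⟩ := cover_set_of_ghDist_lt hcI hnI (L i) hρ4 hdI tL htL
      have hcB : IsCompact (closure (mBoundary (X j))) := isClosed_closure.isCompact
      have hnB : (closure (mBoundary (X j))).Nonempty := (hbne j).closure
      have hdB : dist (setGH _ hcB hnB) Lb < ρ / 4 := hJ2 j (le_trans (le_max_right _ _) hj)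
      obtain ⟨sB, hsBcard, hsBcov⟩ := cover_set_of_ghDist_lt hcB hnB Lb hρ4 hdB tB htB
      have hdρ : δ i < ρ / 4 := lt_trans hi (by linarith)
      refine ⟨sI ∪ sB, ?_, ?_⟩
      · exact le_trans (le_trans (Finset.card_union_le _ _) (add_le_add hsIcard hsBcard))
          (le_max_left _ _)
      · exact cover_completion (hbne j) (hpos i) hdρ sI hsIcov sB hsBcov
    · refine ⟨gs j, ?_, hgs j⟩
      exact le_trans (Finset.le_sup (f := fun j => (gs j).card)
        (Finset.mem_range.2 hj)) (le_max_right _ _)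
  -- package as a family in GH space
  set pU : ℕ → GHSpace := fun j =>
    setGH (Set.univ : Set (Completion (X j))) isCompact_univ
      ⟨↑(hne j 0).choose, trivial⟩ with hpUdef
  have hrepdiam : ∀ j, diam (univ : Set (pU j).Rep) ≤ C := by
    intro j
    haveI := hcc j
    haveI : CompactSpace ↥(Set.univ : Set (Completion (X j))) :=
      isCompact_iff_compactSpace.mp isCompact_univ
    haveI : Nonempty ↥(Set.univ : Set (Completion (X j))) :=
      Set.Nonempty.to_subtype ⟨↑(hne j 0).choose, trivial⟩
    have h1 := diam_le_ghDist (A := (pU j).Rep)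
      (B := ↥(Set.univ : Set (Completion (X j))))
    have h2 : ghDist (pU j).Rep ↥(Set.univ : Set (Completion (X j))) = 0 :=
      ghDist_rep_setGH isCompact_univ ⟨↑(hne j 0).choose, trivial⟩
    have he : diam (univ : Set ↥(Set.univ : Set (Completion (X j))))
        = diam (Set.univ : Set (Completion (X j))) := diam_subtype_univ _
    rw [h2] at h1
    have h3 := hC j
    linarith
  have hrepcov : ∀ n : ℕ, ∃ N : ℕ, ∀ j, ∃ t : Finset ((pU j).Rep),
      t.card ≤ N ∧ (univ : Set ((pU j).Rep)) ⊆ ⋃ x ∈ t, ball x (1 / ((n : ℝ) + 1)) := by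
    intro n
    have h3 : 0 < 1 / ((n : ℝ) + 1) / 3 := by positivity
    obtain ⟨N, hN⟩ := F5 _ h3
    refine ⟨N, fun j => ?_⟩
    haveI := hcc j
    obtain ⟨s, hcard, hscov⟩ := hN j
    obtain ⟨t, htcard, htcov⟩ := cover_rep_of_setGH isCompact_univ
      (⟨↑(hne j 0).choose, trivial⟩ : (Set.univ : Set (Completion (X j))).Nonempty) h3 s
      (subset_trans (subset_univ _) hscov)
    refine ⟨t, htcard.trans hcard, ?_⟩
    have heq : 3 * (1 / ((n : ℝ) + 1) / 3) = 1 / ((n : ℝ) + 1) := by ring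
    rwa [heq] at htcov
  choose KK hKK using hrepcov
  have htb : TotallyBounded (Set.range pU) := by
    apply GromovHausdorff.totallyBounded (u := fun n : ℕ => 1 / ((n : ℝ) + 1)) (K := KK) (C := C)
    · exact tendsto_one_div_add_atTop_nhds_zero_nat
    · rintro p ⟨j, rfl⟩
      exact hrepdiam j
    · rintro p ⟨j, rfl⟩ n
      obtain ⟨t, hc1, hc2⟩ := hKK n j
      refine ⟨(t : Set ((pU j).Rep)), ?_, hc2⟩
      have hcard : Cardinal.mk ↑(↑t : Set ((pU j).Rep)) = (t.card : Cardinal) := by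
        simp [Nat.card_coe_set_eq]
      rw [hcard]
      exact_mod_cast hc1
  have hcompact : IsCompact (closure (Set.range pU)) :=
    TotallyBounded.isCompact_of_isClosed htb.closure isClosed_closure
  obtain ⟨K, -, φ, hφ, hconv⟩ :=
    hcompact.tendsto_subseq (fun j => subset_closure (mem_range_self j))
  exact ⟨φ, hφ, K, tendsto_iff_dist_tendsto_zero.1 hconv⟩
end
end

section
/- Let (X_j, d_j) be a sequence of precompact length metric spaces with compact boundary ∂X_j = X̄_j \ X_j. Suppose the boundaries (∂X_j, d_j) converge in Gromov–Hausdorff sense to a compact metric space (X_∂, d_∂). Then either (1) there exists δ > 0 such that the inner region X_j^δ is nonempty for infinitely many j, or (2) the completions (X̄_j, d_j) converge in Gromov–Hausdorff sense to (X_∂, d_∂). -/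
open Metric Set Filter GromovHausdorff
open UniformSpace (Completion)

noncomputable section

/-- Collapsing to the boundary or not: if the compact boundaries `∂X_j` of precompact length
spaces `X_j` converge in GH sense to a compact metric space (represented by `Lb`), then either
some inner region `X_j^δ` is nonempty for infinitely many `j`, or the completions `X̄_j`
converge in GH sense to the same limit. -/
theorem stmt3 {X : ℕ → Type u} [∀ j, MetricSpace (X j)] [∀ j, Nonempty (X j)]
    -- the X_j are precompact: their completions are compact
    [hcc : ∀ j, CompactSpace (Completion (X j))]
    -- the X_j are length spaces
    (hlen : ∀ j, IsLengthSpace (X j))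
    -- the boundaries are nonempty and compact
    (hbcpt : ∀ j, IsCompact (mBoundary (X j))) (hbne : ∀ j, (mBoundary (X j)).Nonempty)
    -- GH convergence of the boundaries
    (Lb : GHSpace)
    (hGHb : Tendsto (fun j => dist (setGH (mBoundary (X j)) (hbcpt j) (hbne j)) Lb)
      atTop (nhds 0)) :
    (∃ δ > (0 : ℝ), {j : ℕ | (innerRegion (X j) δ).Nonempty}.Infinite) ∨
      Tendsto (fun j => dist
        (setGH (Set.univ : Set (Completion (X j))) isCompact_univ
          ⟨↑(Classical.arbitrary (X j)), trivial⟩) Lb) atTop (nhds 0) := by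
  by_cases h1 : ∃ δ > (0 : ℝ), {j : ℕ | (innerRegion (X j) δ).Nonempty}.Infinite
  · exact Or.inl h1
  right
  push_neg at h1
  rw [Metric.tendsto_nhds]
  intro ε hε
  have hGHb' := (Metric.tendsto_nhds.mp hGHb) (ε / 2) (by linarith)
  have hfin : {j : ℕ | (innerRegion (X j) (ε / 4)).Nonempty}.Finite :=
    h1 (ε / 4) (by linarith)
  have hev : ∀ᶠ j in atTop, ¬ (innerRegion (X j) (ε / 4)).Nonempty := by
    have := Set.Finite.eventually_cofinite_notMem hfin
    rwa [Nat.cofinite_eq_atTop] at this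
  filter_upwards [hev, hGHb'] with j hemp hbd
  rw [Real.dist_eq, sub_zero, abs_of_nonneg dist_nonneg]
  rw [Real.dist_eq, sub_zero, abs_of_nonneg dist_nonneg] at hbd
  -- key estimate: ghDist between completion and boundary
  haveI : CompactSpace (mBoundary (X j)) := isCompact_iff_compactSpace.mp (hbcpt j)
  haveI : Nonempty (mBoundary (X j)) := (hbne j).to_subtype
  haveI : CompactSpace (Set.univ : Set (Completion (X j))) :=
    isCompact_iff_compactSpace.mp isCompact_univ
  haveI : Nonempty (Set.univ : Set (Completion (X j))) :=
    ⟨⟨↑(Classical.arbitrary (X j)), trivial⟩⟩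
  have hdist : dist (setGH (Set.univ : Set (Completion (X j))) isCompact_univ
        ⟨↑(Classical.arbitrary (X j)), trivial⟩)
      (setGH (mBoundary (X j)) (hbcpt j) (hbne j))
      ≤ hausdorffDist (Set.univ : Set (Completion (X j))) (mBoundary (X j)) := by
    have key : ghDist (Set.univ : Set (Completion (X j))) (mBoundary (X j)) ≤
        hausdorffDist
          (range ((↑) : ↥(Set.univ : Set (Completion (X j))) → Completion (X j)))
          (range ((↑) : ↥(mBoundary (X j)) → Completion (X j))) :=
      ghDist_le_hausdorffDist isometry_subtype_coe isometry_subtype_coe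
    rw [Subtype.range_coe, Subtype.range_coe] at key
    simpa only [ghDist, setGH] using key
  have hH : hausdorffDist (Set.univ : Set (Completion (X j))) (mBoundary (X j)) ≤ ε / 4 := by
    apply hausdorffDist_le_of_infDist (by linarith)
    · intro z _
      have hC : IsClosed {w : Completion (X j) | infDist w (mBoundary (X j)) ≤ ε / 4} :=
        isClosed_le (continuous_infDist_pt _) continuous_const
      have hsub : Set.range ((↑) : X j → Completion (X j)) ⊆
          {w : Completion (X j) | infDist w (mBoundary (X j)) ≤ ε / 4} := by
        rintro _ ⟨x, rfl⟩
        have : ¬ (ε / 4 < infDist (↑x : Completion (X j)) (mBoundary (X j))) := by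
          intro hlt
          exact hemp ⟨x, hlt⟩
        exact not_lt.mp this
      have hz : z ∈ closure (Set.range ((↑) : X j → Completion (X j))) :=
        Completion.denseRange_coe z
      exact hC.closure_subset_iff.mpr hsub hz
    · intro y hy
      have : infDist y (Set.univ : Set (Completion (X j))) ≤ dist y y :=
        infDist_le_dist_of_mem trivial
      simp at this
      linarith
  calc dist (setGH (Set.univ : Set (Completion (X j))) isCompact_univ
        ⟨↑(Classical.arbitrary (X j)), trivial⟩) Lb
      ≤ _ + dist (setGH (mBoundary (X j)) (hbcpt j) (hbne j)) Lb := dist_triangle _ _ _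
    _ < ε := by
        have := le_trans hdist hH
        linarith
end
end
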